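/- With Ω_B = tr_S(P_R/d_R) the bath reduced state of the maximally mixed state on H_R ⊆ H_S ⊗ H_B, the purity satisfies tr(Ω_B²) ≤ d_S/d_R; equivalently the effective dimension d_B^eff = 1/tr(Ω_B²) satisfies d_B^eff ≥ d_R/d_S. -/

import Mathlib

open Matrix MeasureTheory
open scoped ComplexOrder RealInnerProductSpace
noncomputable def traceNorm {n : Type*} [Fintype n] [DecidableEq n] (A : Matrix n n ℂ) : ℝ :=
  ((Matrix.posSemidef_conjTranspose_mul_self A).1.eigenvectorUnitary *
    Matrix.diagonal (((↑) : ℝ → ℂ) ∘ Real.sqrt ∘ (Matrix.posSemidef_conjTranspose_mul_self A).1.eigenvalues) *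
    (star (Matrix.posSemidef_conjTranspose_mul_self A).1.eigenvectorUnitary : Matrix n n ℂ)).trace.re
noncomputable def hsNorm {n : Type*} [Fintype n] [DecidableEq n] (A : Matrix n n ℂ) : ℝ :=
  Real.sqrt ((Aᴴ * A).trace.re)
noncomputable def opNorm {n : Type*} [Fintype n] [DecidableEq n] (A : Matrix n n ℂ) : ℝ :=
  ‖Matrix.toEuclideanCLM (𝕜 := ℂ) A‖
noncomputable def ptraceB {s b : Type*} [Fintype b] (ρ : Matrix (s × b) (s × b) ℂ) : Matrix s s ℂ :=
  fun i j => ∑ k, ρ (i, k) (j, k)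
noncomputable def ptraceS {s b : Type*} [Fintype s] (ρ : Matrix (s × b) (s × b) ℂ) : Matrix b b ℂ :=
  fun i j => ∑ k, ρ (k, i) (k, j)
noncomputable def outer {n : Type*} (φ : n → ℂ) : Matrix n n ℂ :=
  fun i j => φ i * (starRingEnd ℂ) (φ j)

lemma trace_eq_rank_of_idem {n : Type*} [Fintype n] [DecidableEq n]
    (P : Matrix n n ℂ) (h : P * P = P) : P.trace = (P.rank : ℂ) := by
  set f := P.mulVecLin with hf
  have hff : f ∘ₗ f = f := by
    rw [hf, ← Matrix.mulVecLin_mul, h]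
  obtain ⟨p, hp⟩ := (LinearMap.isProj_iff_isIdempotentElem f).mpr hff
  have hrange : LinearMap.range f = p := by
    apply le_antisymm
    · rintro x ⟨y, rfl⟩; exact hp.map_mem y
    · intro x hx; exact ⟨x, hp.map_id x hx⟩
  have htr : LinearMap.trace ℂ _ f = (Module.finrank ℂ p : ℂ) := hp.trace
  have h1 : LinearMap.trace ℂ _ f = P.trace := by
    rw [LinearMap.trace_eq_matrix_trace ℂ (Pi.basisFun ℂ n) f]
    congr 1
    rw [LinearMap.toMatrix_eq_toMatrix']
    exact LinearMap.toMatrix'_toLin' P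
  have h2 : P.rank = Module.finrank ℂ p := by
    rw [Matrix.rank, hrange]
  rw [← h1, htr, h2]

/-- The purity of Ω_B = tr_S(P_R/d_R) satisfies tr(Ω_B²) ≤ d_S/d_R; equivalently
the effective dimension d_B^eff = 1/tr(Ω_B²) satisfies d_B^eff ≥ d_R/d_S. -/
theorem stmt_10 (dS dB dR : ℕ) (hdS : 0 < dS) (hdR : 0 < dR)
    (P : Matrix (Fin dS × Fin dB) (Fin dS × Fin dB) ℂ)
    (hherm : P.IsHermitian) (hidem : P * P = P) (hrank : P.rank = dR)
    (ΩB : Matrix (Fin dB) (Fin dB) ℂ) (hΩB : ΩB = ptraceS ((dR : ℂ)⁻¹ • P)) :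
    (ΩB * ΩB).trace.re ≤ (dS : ℝ) / dR ∧
    (dR : ℝ) / dS ≤ 1 / (ΩB * ΩB).trace.re := by
  have hdR' : (dR : ℝ) ≠ 0 := Nat.cast_ne_zero.mpr hdR.ne'
  have hdRpos : (0:ℝ) < dR := Nat.cast_pos.mpr hdR
  have hdS' : (0:ℝ) < dS := Nat.cast_pos.mpr hdS
  have htrP : P.trace = (dR : ℂ) := by rw [trace_eq_rank_of_idem P hidem, hrank]
  set Q : Matrix (Fin dB) (Fin dB) ℂ := ptraceS P with hQdef
  have hΩQ : ΩB = (dR : ℂ)⁻¹ • Q := by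
    rw [hΩB]; funext i j
    simp [ptraceS, hQdef, Matrix.smul_apply, smul_eq_mul, Finset.mul_sum]
  have hQconj : ∀ i j, (starRingEnd ℂ) (Q i j) = Q j i := by
    intro i j
    simp only [hQdef, ptraceS, map_sum]
    exact Finset.sum_congr rfl fun k _ => hherm.apply (k, j) (k, i)
  have hQtr : Q.trace = (dR : ℂ) := by
    rw [← htrP]
    simp only [Matrix.trace, Matrix.diag, hQdef, ptraceS]
    rw [Finset.sum_comm]
    exact (Fintype.sum_prod_type (fun p => P p p)).symm
  set S : ℝ := ∑ i, ∑ j, Complex.normSq (Q i j) with hSdef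
  have hQQ : (Q * Q).trace.re = S := by
    have : (Q * Q).trace = (S : ℂ) := by
      simp only [Matrix.trace, Matrix.diag, Matrix.mul_apply, hSdef]
      push_cast
      refine Finset.sum_congr rfl fun i _ => Finset.sum_congr rfl fun j _ => ?_
      have h : Q j i = (starRingEnd ℂ) (Q i j) := (hQconj i j).symm
      rw [h, Complex.mul_conj]
    rw [this, Complex.ofReal_re]
  have hmain : (ΩB * ΩB).trace.re = ((dR:ℝ)⁻¹)^2 * S := by
    rw [hΩQ]
    have h1 : ((dR : ℂ)⁻¹ • Q) * ((dR : ℂ)⁻¹ • Q) = ((dR:ℂ)⁻¹^2) • (Q * Q) := by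
      rw [Matrix.smul_mul, Matrix.mul_smul, smul_smul]; ring_nf
    have hc : ((dR:ℂ)⁻¹^2) = (((dR:ℝ)⁻¹^2 : ℝ) : ℂ) := by push_cast; ring
    rw [h1, Matrix.trace_smul, hc, smul_eq_mul, Complex.re_ofReal_mul, hQQ]
  have hSbound : S ≤ (dS : ℝ) * dR := by
    have step1 : S ≤ (dS:ℝ) * ∑ i, ∑ j, ∑ k, Complex.normSq (P (k,i) (k,j)) := by
      rw [hSdef, Finset.mul_sum]
      refine Finset.sum_le_sum fun i _ => ?_
      rw [Finset.mul_sum]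
      refine Finset.sum_le_sum fun j _ => ?_
      have h1 : ‖Q i j‖ ≤ ∑ k, ‖P (k,i) (k,j)‖ := by
        simpa [hQdef, ptraceS] using norm_sum_le Finset.univ (fun k => P (k,i) (k,j))
      calc Complex.normSq (Q i j) = ‖Q i j‖ ^ 2 := (Complex.sq_norm _).symm
        _ ≤ (∑ k, ‖P (k,i) (k,j)‖) ^ 2 :=
              pow_le_pow_left₀ (norm_nonneg _) h1 2
        _ ≤ (Finset.univ : Finset (Fin dS)).card * ∑ k, ‖P (k,i) (k,j)‖ ^ 2 :=
              sq_sum_le_card_mul_sum_sq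
        _ = (dS:ℝ) * ∑ k, Complex.normSq (P (k,i) (k,j)) := by
              simp [Complex.sq_norm]
    have step2 : ∑ i, ∑ j, ∑ k, Complex.normSq (P (k,i) (k,j))
        ≤ ∑ a : Fin dS × Fin dB, ∑ b : Fin dS × Fin dB, Complex.normSq (P a b) := by
      calc ∑ i, ∑ j, ∑ k, Complex.normSq (P (k,i) (k,j))
          = ∑ i, ∑ k, ∑ j, Complex.normSq (P (k,i) (k,j)) :=
            Finset.sum_congr rfl fun i _ => Finset.sum_comm
        _ = ∑ k, ∑ i, ∑ j, Complex.normSq (P (k,i) (k,j)) := Finset.sum_comm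
        _ ≤ ∑ k, ∑ i, ∑ l, ∑ j', Complex.normSq (P (k,i) (l,j')) := by
            refine Finset.sum_le_sum fun k _ => Finset.sum_le_sum fun i _ => ?_
            exact Finset.single_le_sum
              (f := fun l => ∑ j', Complex.normSq (P (k,i) (l,j')))
              (fun _ _ => Finset.sum_nonneg fun _ _ => Complex.normSq_nonneg _)
              (Finset.mem_univ k)
        _ = ∑ a : Fin dS × Fin dB, ∑ b : Fin dS × Fin dB, Complex.normSq (P a b) := by
            simp only [Fintype.sum_prod_type]
    have step3 : ∑ a : Fin dS × Fin dB, ∑ b : Fin dS × Fin dB, Complex.normSq (P a b)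
        = (dR:ℝ) := by
      have h : (P * P).trace
          = ((∑ a : Fin dS × Fin dB, ∑ b, Complex.normSq (P a b) : ℝ) : ℂ) := by
        simp only [Matrix.trace, Matrix.diag, Matrix.mul_apply]
        push_cast
        refine Finset.sum_congr rfl fun a _ => Finset.sum_congr rfl fun b _ => ?_
        have hba : P b a = (starRingEnd ℂ) (P a b) := (hherm.apply b a).symm
        rw [hba, Complex.mul_conj]
      rw [hidem, htrP] at h
      exact_mod_cast h.symm
    calc S ≤ (dS:ℝ) * ∑ i, ∑ j, ∑ k, Complex.normSq (P (k,i) (k,j)) := step1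
      _ ≤ (dS:ℝ) * ∑ a : Fin dS × Fin dB, ∑ b, Complex.normSq (P a b) :=
          mul_le_mul_of_nonneg_left step2 (Nat.cast_nonneg _)
      _ = (dS:ℝ) * dR := by rw [step3]
  have hSpos : 0 < S := by
    have hex : ∃ i, Q i i ≠ 0 := by
      by_contra h
      push_neg at h
      have h0 : Q.trace = 0 := by simp [Matrix.trace, Matrix.diag, h]
      rw [hQtr] at h0
      exact hdR' (by exact_mod_cast h0)
    obtain ⟨i, hi⟩ := hex
    calc (0:ℝ) < Complex.normSq (Q i i) := Complex.normSq_pos.mpr hi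
      _ ≤ ∑ j, Complex.normSq (Q i j) :=
          Finset.single_le_sum (f := fun j => Complex.normSq (Q i j))
            (fun _ _ => Complex.normSq_nonneg _) (Finset.mem_univ i)
      _ ≤ S := Finset.single_le_sum (f := fun i => ∑ j, Complex.normSq (Q i j))
            (fun _ _ => Finset.sum_nonneg fun _ _ => Complex.normSq_nonneg _)
            (Finset.mem_univ i)
  have htpos : 0 < (ΩB * ΩB).trace.re := by
    rw [hmain]; positivity
  have hineq1 : (ΩB * ΩB).trace.re ≤ (dS : ℝ) / dR := by
    rw [hmain]
    calc ((dR:ℝ)⁻¹)^2 * S ≤ ((dR:ℝ)⁻¹)^2 * ((dS:ℝ) * dR) :=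
          mul_le_mul_of_nonneg_left hSbound (by positivity)
      _ = (dS:ℝ) / dR := by field_simp
  refine ⟨hineq1, ?_⟩
  rw [div_le_div_iff₀ hdS' htpos]
  have h2 : (ΩB * ΩB).trace.re * dR ≤ dS := (le_div_iff₀ hdRpos).mp hineq1
  nlinarith [h2]
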